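/- arXiv:1609.01195 — 3 statements merged into one kernel-verified Lean document; each statement's English description precedes it below -/
import Mathlib

section
/- Let A = ℚ[a,b] be the polynomial ring in two variables (realized as MvPolynomial (Fin 2) ℚ with a = X 0, b = X 1). Let G ∈ A⟦t⟧ be any power series with G · (1 + (2a+4b)t) = 1, and let C ∈ A be the coefficient of t³ in the power series (1 + at)² (1 + bt)⁴ · G. Then for every ℚ-linear map φ : A → ℚ satisfying φ(a·b³) = 1 and φ(a⁴) = φ(a³·b) = φ(a²·b²) = φ(b⁴) = 0, one has φ(C · (2a + 4b)) = −168. -/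
open MvPolynomial

/-- Euler number of the degree 14 Calabi–Yau threefold `X₁₄ ⊂ ℙ¹ × ℙ³`:
with `a = X 0`, `b = X 1` the hyperplane classes, `G = (1 + (2a+4b)t)⁻¹`,
`c₃ = [t³] ((1+at)²(1+bt)⁴ · G)`, and `φ` the degree map on `H⁶(ℙ¹×ℙ³)`,
one has `φ(c₃ · (2a+4b)) = −168`. -/
theorem euler_number_deg14
    (G : PowerSeries (MvPolynomial (Fin 2) ℚ))
    (hG : G * (1 + PowerSeries.C (2 * X 0 + 4 * X 1) *
        PowerSeries.X) = 1)
    (c₃ : MvPolynomial (Fin 2) ℚ)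
    (hc₃ : c₃ = PowerSeries.coeff 3
      ((1 + PowerSeries.C (X 0) * PowerSeries.X) ^ 2 *
       (1 + PowerSeries.C (X 1) * PowerSeries.X) ^ 4 * G))
    (φ : MvPolynomial (Fin 2) ℚ →ₗ[ℚ] ℚ)
    (h1 : φ (X 0 * X 1 ^ 3) = 1)
    (h2 : φ (X 0 ^ 4) = 0)
    (h3 : φ (X 0 ^ 3 * X 1) = 0)
    (h4 : φ (X 0 ^ 2 * X 1 ^ 2) = 0)
    (h5 : φ (X 1 ^ 4) = 0) :
    φ (c₃ * (2 * X 0 + 4 * X 1)) = -168 := by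
  set s : MvPolynomial (Fin 2) ℚ := 2 * X 0 + 4 * X 1 with hs
  set a : MvPolynomial (Fin 2) ℚ := X 0 with ha
  set b : MvPolynomial (Fin 2) ℚ := X 1 with hb
  -- coefficient 0 of G
  have h0 : PowerSeries.coeff 0 G = 1 := by
    have := congrArg (PowerSeries.coeff 0) hG
    simpa [mul_add] using this
  -- recursion for the coefficients of G
  have hrec : ∀ n : ℕ, PowerSeries.coeff (n + 1) G =
      -s * PowerSeries.coeff n G := by
    intro n
    have h := congrArg (PowerSeries.coeff (n + 1)) hG
    have h' : G * (1 + PowerSeries.C s * PowerSeries.X) =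
        G + PowerSeries.C s * (PowerSeries.X * G) := by ring
    rw [h', map_add, PowerSeries.coeff_C_mul, PowerSeries.coeff_succ_X_mul] at h
    simp only [PowerSeries.coeff_one, Nat.succ_ne_zero, if_false] at h
    have := eq_neg_of_add_eq_zero_left h
    rw [this]; ring
  have hg1 : PowerSeries.coeff 1 G = -s := by
    have := hrec 0; rw [this, h0]; ring
  have hg2 : PowerSeries.coeff 2 G = s ^ 2 := by
    have := hrec 1; rw [this, hg1]; ring
  have hg3 : PowerSeries.coeff 3 G = -s ^ 3 := by
    have := hrec 2; rw [this, hg2]; ring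
  -- expand the polynomial factor
  have hP : (1 + PowerSeries.C a * PowerSeries.X) ^ 2 *
      (1 + PowerSeries.C b * PowerSeries.X) ^ 4 =
      1 + PowerSeries.C (2 * a + 4 * b) * PowerSeries.X
        + PowerSeries.C (a ^ 2 + 8 * a * b + 6 * b ^ 2) *
            PowerSeries.X ^ 2
        + PowerSeries.C (4 * a ^ 2 * b + 12 * a * b ^ 2 + 4 * b ^ 3) *
            PowerSeries.X ^ 3
        + PowerSeries.C (6 * a ^ 2 * b ^ 2 + 8 * a * b ^ 3 + b ^ 4) *
            PowerSeries.X ^ 4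
        + PowerSeries.C (4 * a ^ 2 * b ^ 3 + 2 * a * b ^ 4) *
            PowerSeries.X ^ 5
        + PowerSeries.C (a ^ 2 * b ^ 4) * PowerSeries.X ^ 6 := by
    simp only [map_add, map_mul, map_pow, map_ofNat]
    ring
  -- compute c₃
  have hc : c₃ = -s ^ 3 + (2 * a + 4 * b) * s ^ 2
      + (a ^ 2 + 8 * a * b + 6 * b ^ 2) * (-s)
      + (4 * a ^ 2 * b + 12 * a * b ^ 2 + 4 * b ^ 3) := by
    rw [hc₃, hP]
    have e1 : PowerSeries.C (2 * a + 4 * b) * PowerSeries.X * G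
        = PowerSeries.C (2 * a + 4 * b) *
          (PowerSeries.X ^ 1 * G) := by ring
    have e2 : PowerSeries.C (a ^ 2 + 8 * a * b + 6 * b ^ 2) *
        PowerSeries.X ^ 2 * G
        = PowerSeries.C (a ^ 2 + 8 * a * b + 6 * b ^ 2) *
          (PowerSeries.X ^ 2 * G) := by ring
    have e3 : PowerSeries.C
        (4 * a ^ 2 * b + 12 * a * b ^ 2 + 4 * b ^ 3) * PowerSeries.X ^ 3 * G
        = PowerSeries.C (4 * a ^ 2 * b + 12 * a * b ^ 2 + 4 * b ^ 3)
          * (PowerSeries.X ^ 3 * G) := by ring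
    have e4 : PowerSeries.C
        (6 * a ^ 2 * b ^ 2 + 8 * a * b ^ 3 + b ^ 4) * PowerSeries.X ^ 4 * G
        = PowerSeries.C (6 * a ^ 2 * b ^ 2 + 8 * a * b ^ 3 + b ^ 4)
          * (PowerSeries.X ^ 4 * G) := by ring
    have e5 : PowerSeries.C (4 * a ^ 2 * b ^ 3 + 2 * a * b ^ 4) *
        PowerSeries.X ^ 5 * G
        = PowerSeries.C (4 * a ^ 2 * b ^ 3 + 2 * a * b ^ 4) *
          (PowerSeries.X ^ 5 * G) := by ring
    have e6 : PowerSeries.C (a ^ 2 * b ^ 4) * PowerSeries.X ^ 6 * G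
        = PowerSeries.C (a ^ 2 * b ^ 4) *
          (PowerSeries.X ^ 6 * G) := by ring
    rw [add_mul, add_mul, add_mul, add_mul, add_mul, add_mul, one_mul,
      e1, e2, e3, e4, e5, e6, map_add, map_add, map_add, map_add, map_add, map_add]
    rw [PowerSeries.coeff_C_mul, PowerSeries.coeff_C_mul, PowerSeries.coeff_C_mul,
      PowerSeries.coeff_C_mul, PowerSeries.coeff_C_mul, PowerSeries.coeff_C_mul]
    rw [PowerSeries.coeff_X_pow_mul' G 1 3, PowerSeries.coeff_X_pow_mul' G 2 3,
      PowerSeries.coeff_X_pow_mul' G 3 3, if_pos (by norm_num : (1 : ℕ) ≤ 3),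
      if_pos (by norm_num : (2 : ℕ) ≤ 3), if_pos (by norm_num : (3 : ℕ) ≤ 3)]
    simp only [Nat.reduceSub]
    rw [PowerSeries.coeff_X_pow_mul' G 4 3, PowerSeries.coeff_X_pow_mul' G 5 3,
      PowerSeries.coeff_X_pow_mul' G 6 3]
    simp only [if_neg (by norm_num : ¬ (4 : ℕ) ≤ 3), if_neg (by norm_num : ¬ (5 : ℕ) ≤ 3),
      if_neg (by norm_num : ¬ (6 : ℕ) ≤ 3)]
    rw [hg3, hg2, hg1, h0]
    ring
  -- final evaluation via φ
  have hkey : c₃ * (2 * X 0 + 4 * X 1) =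
      (-4 : ℚ) • (X 0 ^ 4) + (-40 : ℚ) • (X 0 ^ 3 * X 1) + (-128 : ℚ) • (X 0 ^ 2 * X 1 ^ 2)
        + (-168 : ℚ) • (X 0 * X 1 ^ 3) + (-80 : ℚ) • (X 1 ^ 4) := by
    simp only [MvPolynomial.smul_eq_C_mul, map_neg, map_ofNat]
    rw [hc, hs, ha, hb]
    ring
  rw [hkey]
  simp only [ha, hb] at h1 h2 h3 h4 h5
  simp only [map_add, map_smul, h1, h2, h3, h4, h5, smul_eq_mul]
  norm_num
end

section
/- Let A = ℚ[h,η] be the polynomial ring in two variables (realized as MvPolynomial (Fin 2) ℚ with h = X 0, η = X 1). Let G ∈ A⟦t⟧ be any power series with G · (1 + 2ηt)² (1 + (−2h+3η)t) = 1, and let C ∈ A be the coefficient of t³ in the power series (1 + ht)² (1 + ηt)² (1 + (−h+η)t)³ (1 + (−h+2η)t) · G. Then the polynomial C · (2η)² · (−2h + 3η) − (212·h·η⁵ − 120·η⁶) lies in the ideal of A generated by h². -/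
open MvPolynomial

private lemma coeff_aux (φ : PowerSeries (MvPolynomial (Fin 2) ℚ))
    (a : MvPolynomial (Fin 2) ℚ) (d k : ℕ) :
    PowerSeries.coeff d (φ * (PowerSeries.C a * PowerSeries.X ^ k)) =
      if k ≤ d then a * PowerSeries.coeff (d - k) φ else 0 := by
  rw [show φ * (PowerSeries.C a * PowerSeries.X ^ k)
      = PowerSeries.C a * (φ * PowerSeries.X ^ k) from by ring,
    PowerSeries.coeff_C_mul, PowerSeries.coeff_mul_X_pow', mul_ite, mul_zero]

private lemma coeff_aux2 (φ : PowerSeries (MvPolynomial (Fin 2) ℚ))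
    (a : MvPolynomial (Fin 2) ℚ) (d k : ℕ) :
    PowerSeries.coeff d (PowerSeries.C a * PowerSeries.X ^ k * φ) =
      if k ≤ d then a * PowerSeries.coeff (d - k) φ else 0 := by
  rw [mul_comm, coeff_aux]

set_option maxHeartbeats 2000000

/-- Chern class computation for Calabi–Yau no. 6: with `h = X 0`, `η = X 1`,
`G = ((1+2ηt)²(1+(−2h+3η)t))⁻¹`, and
`c₃ = [t³] ((1+ht)²(1+ηt)²(1+(−h+η)t)³(1+(−h+2η)t) · G)`, the class
`c₃ · (2η)² · (−2h+3η)` equals `212hη⁵ − 120η⁶` modulo the ideal `(h²)`. -/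
theorem chern_class_no6
    (G : PowerSeries (MvPolynomial (Fin 2) ℚ))
    (hG : G * (1 + PowerSeries.C (R := MvPolynomial (Fin 2) ℚ) (2 * X 1) * PowerSeries.X) ^ 2 *
        (1 + PowerSeries.C (R := MvPolynomial (Fin 2) ℚ) (-2 * X 0 + 3 * X 1) * PowerSeries.X)
        = 1)
    (c₃ : MvPolynomial (Fin 2) ℚ)
    (hc₃ : c₃ = PowerSeries.coeff (R := MvPolynomial (Fin 2) ℚ) 3
      ((1 + PowerSeries.C (R := MvPolynomial (Fin 2) ℚ) (X 0) * PowerSeries.X) ^ 2 *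
       (1 + PowerSeries.C (R := MvPolynomial (Fin 2) ℚ) (X 1) * PowerSeries.X) ^ 2 *
       (1 + PowerSeries.C (R := MvPolynomial (Fin 2) ℚ) (-X 0 + X 1) * PowerSeries.X) ^ 3 *
       (1 + PowerSeries.C (R := MvPolynomial (Fin 2) ℚ) (-X 0 + 2 * X 1) * PowerSeries.X) * G)) :
    c₃ * (2 * X 1) ^ 2 * (-2 * X 0 + 3 * X 1)
        - (212 * X 0 * X 1 ^ 5 - 120 * X 1 ^ 6)
      ∈ Ideal.span {(X 0 ^ 2 : MvPolynomial (Fin 2) ℚ)} := by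
  have hF : (1 + PowerSeries.C (R := MvPolynomial (Fin 2) ℚ) (2 * X 1) * PowerSeries.X) ^ 2 *
        (1 + PowerSeries.C (R := MvPolynomial (Fin 2) ℚ) (-2 * X 0 + 3 * X 1) * PowerSeries.X)
      = PowerSeries.C (R := MvPolynomial (Fin 2) ℚ) 1 * PowerSeries.X ^ 0
        + PowerSeries.C (R := MvPolynomial (Fin 2) ℚ) (7 * X 1 - 2 * X 0) * PowerSeries.X ^ 1
        + PowerSeries.C (R := MvPolynomial (Fin 2) ℚ) (16 * X 1 ^ 2 - 8 * X 0 * X 1) * PowerSeries.X ^ 2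
        + PowerSeries.C (R := MvPolynomial (Fin 2) ℚ) (12 * X 1 ^ 3 - 8 * X 0 * X 1 ^ 2) * PowerSeries.X ^ 3 := by
    simp only [map_add, map_mul, map_pow, map_sub, map_neg, map_ofNat, map_one]
    ring
  rw [mul_assoc, hF] at hG
  have e0 := congrArg (PowerSeries.coeff (R := MvPolynomial (Fin 2) ℚ) 0) hG
  have e1 := congrArg (PowerSeries.coeff (R := MvPolynomial (Fin 2) ℚ) 1) hG
  have e2 := congrArg (PowerSeries.coeff (R := MvPolynomial (Fin 2) ℚ) 2) hG
  have e3 := congrArg (PowerSeries.coeff (R := MvPolynomial (Fin 2) ℚ) 3) hG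
  simp only [mul_add, map_add, coeff_aux, PowerSeries.coeff_one] at e0 e1 e2 e3
  norm_num at e0 e1 e2 e3
  have g0 : PowerSeries.constantCoeff (R := MvPolynomial (Fin 2) ℚ) G = 1 := e0
  have g1 : PowerSeries.coeff (R := MvPolynomial (Fin 2) ℚ) 1 G = 2 * X 0 - 7 * X 1 := by
    linear_combination e1 - (7 * X 1 - 2 * X 0) * g0
  have g2 : PowerSeries.coeff (R := MvPolynomial (Fin 2) ℚ) 2 G
      = 33 * X 1 ^ 2 - 20 * X 0 * X 1 + 4 * X 0 ^ 2 := by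
    linear_combination e2 - (7 * X 1 - 2 * X 0) * g1 - (16 * X 1 ^ 2 - 8 * X 0 * X 1) * g0
  have g3 : PowerSeries.coeff (R := MvPolynomial (Fin 2) ℚ) 3 G
      = -131 * X 1 ^ 3 + 126 * X 0 * X 1 ^ 2 - 52 * X 0 ^ 2 * X 1 + 8 * X 0 ^ 3 := by
    linear_combination e3 - (7 * X 1 - 2 * X 0) * g2 - (16 * X 1 ^ 2 - 8 * X 0 * X 1) * g1
      - (12 * X 1 ^ 3 - 8 * X 0 * X 1 ^ 2) * g0
  have hN : (1 + PowerSeries.C (R := MvPolynomial (Fin 2) ℚ) (X 0) * PowerSeries.X) ^ 2 *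
       (1 + PowerSeries.C (R := MvPolynomial (Fin 2) ℚ) (X 1) * PowerSeries.X) ^ 2 *
       (1 + PowerSeries.C (R := MvPolynomial (Fin 2) ℚ) (-X 0 + X 1) * PowerSeries.X) ^ 3 *
       (1 + PowerSeries.C (R := MvPolynomial (Fin 2) ℚ) (-X 0 + 2 * X 1) * PowerSeries.X)
      = PowerSeries.C (R := MvPolynomial (Fin 2) ℚ) 1 * PowerSeries.X ^ 0
      + PowerSeries.C (R := MvPolynomial (Fin 2) ℚ) (7 * X 1 - 2 * X 0) * PowerSeries.X ^ 1
      + PowerSeries.C (R := MvPolynomial (Fin 2) ℚ) (20 * X 1 ^ 2 - 9 * X 0 * X 1 - X 0 ^ 2) * PowerSeries.X ^ 2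
      + PowerSeries.C (R := MvPolynomial (Fin 2) ℚ)
          (30 * X 1 ^ 3 - 12 * X 0 * X 1 ^ 2 - 12 * X 0 ^ 2 * X 1 + 4 * X 0 ^ 3) * PowerSeries.X ^ 3
      + PowerSeries.C (R := MvPolynomial (Fin 2) ℚ)
          (25 * X 1 ^ 4 + 2 * X 0 * X 1 ^ 3 - 39 * X 0 ^ 2 * X 1 ^ 2 + 18 * X 0 ^ 3 * X 1 - X 0 ^ 4) * PowerSeries.X ^ 4
      + PowerSeries.C (R := MvPolynomial (Fin 2) ℚ)
          (11 * X 1 ^ 5 + 18 * X 0 * X 1 ^ 4 - 53 * X 0 ^ 2 * X 1 ^ 3 + 24 * X 0 ^ 3 * X 1 ^ 2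
            + 3 * X 0 ^ 4 * X 1 - 2 * X 0 ^ 5) * PowerSeries.X ^ 5
      + PowerSeries.C (R := MvPolynomial (Fin 2) ℚ)
          (2 * X 1 ^ 6 + 15 * X 0 * X 1 ^ 5 - 30 * X 0 ^ 2 * X 1 ^ 4 + 3 * X 0 ^ 3 * X 1 ^ 3
            + 18 * X 0 ^ 4 * X 1 ^ 2 - 9 * X 0 ^ 5 * X 1 + X 0 ^ 6) * PowerSeries.X ^ 6
      + PowerSeries.C (R := MvPolynomial (Fin 2) ℚ)
          (4 * X 0 * X 1 ^ 6 - 3 * X 0 ^ 2 * X 1 ^ 5 - 14 * X 0 ^ 3 * X 1 ^ 4 + 23 * X 0 ^ 4 * X 1 ^ 3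
            - 12 * X 0 ^ 5 * X 1 ^ 2 + 2 * X 0 ^ 6 * X 1) * PowerSeries.X ^ 7
      + PowerSeries.C (R := MvPolynomial (Fin 2) ℚ)
          (2 * X 0 ^ 2 * X 1 ^ 6 - 7 * X 0 ^ 3 * X 1 ^ 5 + 9 * X 0 ^ 4 * X 1 ^ 4 - 5 * X 0 ^ 5 * X 1 ^ 3
            + X 0 ^ 6 * X 1 ^ 2) * PowerSeries.X ^ 8 := by
    simp only [map_add, map_mul, map_pow, map_sub, map_neg, map_ofNat, map_one]
    ring
  rw [hN] at hc₃
  simp only [add_mul, map_add, coeff_aux2] at hc₃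
  norm_num at hc₃
  have hc : c₃ = 2 * X 0 ^ 3 - 7 * X 0 ^ 2 * X 1 + 11 * X 0 * X 1 ^ 2 - 10 * X 1 ^ 3 := by
    linear_combination hc₃ + g3 + (7 * X 1 - 2 * X 0) * g2
      + (20 * X 1 ^ 2 - 9 * X 0 * X 1 - X 0 ^ 2) * g1
      + (30 * X 1 ^ 3 - 12 * X 0 * X 1 ^ 2 - 12 * X 0 ^ 2 * X 1 + 4 * X 0 ^ 3) * g0
  rw [Ideal.mem_span_singleton]
  exact ⟨-16 * X 0 ^ 2 * X 1 ^ 2 + 80 * X 0 * X 1 ^ 3 - 172 * X 1 ^ 4, by rw [hc]; ring⟩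
end

section
/- Let A = ℚ[h,η] be the polynomial ring in two variables (realized as MvPolynomial (Fin 2) ℚ with h = X 0, η = X 1). Let G ∈ A⟦t⟧ be any power series with G · (1 + 2ηt)² (1 + (−2h+3η)t) = 1, and let C ∈ A be the coefficient of t³ in the power series (1 + ht)² (1 + ηt)² (1 + (−h+η)t)³ (1 + (−h+2η)t) · G. Then for every ℚ-linear map φ : A → ℚ satisfying φ(h·η⁵) = 1/2, φ(η⁶) = 7/4, and φ(h^i·η^(6−i)) = 0 for all 2 ≤ i ≤ 6, one has φ(C · (2η)² · (−2h + 3η)) = −104. -/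
set_option maxHeartbeats 1600000


open MvPolynomial

private abbrev Rcy : Type := MvPolynomial (Fin 2) ℚ

private lemma hE_no6 :
    (1 + PowerSeries.C (R := Rcy) (2 * X 1) * PowerSeries.X) ^ 2 *
      (1 + PowerSeries.C (R := Rcy) (-2 * X 0 + 3 * X 1) * PowerSeries.X)
    = 1 + PowerSeries.C (R := Rcy) (-2 * X 0 + 7 * X 1) * PowerSeries.X ^ 1
        + PowerSeries.C (R := Rcy) (-8 * (X 0 * X 1) + 16 * X 1 ^ 2) * PowerSeries.X ^ 2
        + PowerSeries.C (R := Rcy) (-8 * (X 0 * X 1 ^ 2) + 12 * X 1 ^ 3) * PowerSeries.X ^ 3 := by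
  simp only [map_add, map_mul, map_neg, map_pow, map_ofNat]
  ring

private lemma hP_no6 :
    (1 + PowerSeries.C (R := Rcy) (X 0) * PowerSeries.X) ^ 2 *
      (1 + PowerSeries.C (R := Rcy) (X 1) * PowerSeries.X) ^ 2 *
      (1 + PowerSeries.C (R := Rcy) (-X 0 + X 1) * PowerSeries.X) ^ 3 *
      (1 + PowerSeries.C (R := Rcy) (-X 0 + 2 * X 1) * PowerSeries.X)
    = 1 + PowerSeries.C (R := Rcy) (-2 * X 0 + 7 * X 1) * PowerSeries.X ^ 1
        + PowerSeries.C (R := Rcy) (-X 0 ^ 2 - 9 * (X 0 * X 1) + 20 * X 1 ^ 2) * PowerSeries.X ^ 2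
        + PowerSeries.C (R := Rcy) (4 * X 0 ^ 3 - 12 * (X 0 ^ 2 * X 1) - 12 * (X 0 * X 1 ^ 2)
            + 30 * X 1 ^ 3) * PowerSeries.X ^ 3
        + PowerSeries.C (R := Rcy) (-X 0 ^ 4 + 18 * (X 0 ^ 3 * X 1) - 39 * (X 0 ^ 2 * X 1 ^ 2)
            + 2 * (X 0 * X 1 ^ 3) + 25 * X 1 ^ 4) * PowerSeries.X ^ 4
        + PowerSeries.C (R := Rcy) (-2 * X 0 ^ 5 + 3 * (X 0 ^ 4 * X 1) + 24 * (X 0 ^ 3 * X 1 ^ 2)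
            - 53 * (X 0 ^ 2 * X 1 ^ 3) + 18 * (X 0 * X 1 ^ 4) + 11 * X 1 ^ 5) * PowerSeries.X ^ 5
        + PowerSeries.C (R := Rcy) (X 0 ^ 6 - 9 * (X 0 ^ 5 * X 1) + 18 * (X 0 ^ 4 * X 1 ^ 2)
            + 3 * (X 0 ^ 3 * X 1 ^ 3) - 30 * (X 0 ^ 2 * X 1 ^ 4) + 15 * (X 0 * X 1 ^ 5)
            + 2 * X 1 ^ 6) * PowerSeries.X ^ 6
        + PowerSeries.C (R := Rcy) (2 * (X 0 ^ 6 * X 1) - 12 * (X 0 ^ 5 * X 1 ^ 2)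
            + 23 * (X 0 ^ 4 * X 1 ^ 3) - 14 * (X 0 ^ 3 * X 1 ^ 4) - 3 * (X 0 ^ 2 * X 1 ^ 5)
            + 4 * (X 0 * X 1 ^ 6)) * PowerSeries.X ^ 7
        + PowerSeries.C (R := Rcy) (X 0 ^ 6 * X 1 ^ 2 - 5 * (X 0 ^ 5 * X 1 ^ 3)
            + 9 * (X 0 ^ 4 * X 1 ^ 4) - 7 * (X 0 ^ 3 * X 1 ^ 5)
            + 2 * (X 0 ^ 2 * X 1 ^ 6)) * PowerSeries.X ^ 8 := by
  simp only [map_add, map_sub, map_mul, map_neg, map_pow, map_ofNat]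
  ring

/-- Euler number of Calabi–Yau no. 6: with `h = X 0`, `η = X 1`,
`G = ((1+2ηt)²(1+(−2h+3η)t))⁻¹`,
`c₃ = [t³] ((1+ht)²(1+ηt)²(1+(−h+η)t)³(1+(−h+2η)t) · G)`, and `φ` the degree map
determined by `φ(hη⁵) = 1/2`, `φ(η⁶) = 7/4`, `φ(hⁱη⁶⁻ⁱ) = 0` for `2 ≤ i ≤ 6`,
one has `φ(c₃ · (2η)² · (−2h+3η)) = −104`. -/
theorem euler_number_no6
    (G : PowerSeries (MvPolynomial (Fin 2) ℚ))
    (hG : G * (1 + PowerSeries.C (2 * X 1) * PowerSeries.X) ^ 2 *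
        (1 + PowerSeries.C (-2 * X 0 + 3 * X 1) * PowerSeries.X)
        = 1)
    (c₃ : MvPolynomial (Fin 2) ℚ)
    (hc₃ : c₃ = PowerSeries.coeff (R := MvPolynomial (Fin 2) ℚ) 3
      ((1 + PowerSeries.C (X 0) * PowerSeries.X) ^ 2 *
       (1 + PowerSeries.C (X 1) * PowerSeries.X) ^ 2 *
       (1 + PowerSeries.C (-X 0 + X 1) * PowerSeries.X) ^ 3 *
       (1 + PowerSeries.C (-X 0 + 2 * X 1) * PowerSeries.X) * G))
    (φ : MvPolynomial (Fin 2) ℚ →ₗ[ℚ] ℚ)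
    (h1 : φ (X 0 * X 1 ^ 5) = 1 / 2)
    (h2 : φ (X 1 ^ 6) = 7 / 4)
    (h3 : ∀ i : ℕ, 2 ≤ i → i ≤ 6 → φ (X 0 ^ i * X 1 ^ (6 - i)) = 0) :
    φ (c₃ * (2 * X 1) ^ 2 * (-2 * X 0 + 3 * X 1)) = -104 := by
  -- rewrite hG using the expansion of the denominator
  have hG2 : G + G * PowerSeries.C (R := Rcy) (-2 * X 0 + 7 * X 1) * PowerSeries.X ^ 1
      + G * PowerSeries.C (R := Rcy) (-8 * (X 0 * X 1) + 16 * X 1 ^ 2) * PowerSeries.X ^ 2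
      + G * PowerSeries.C (R := Rcy) (-8 * (X 0 * X 1 ^ 2) + 12 * X 1 ^ 3) * PowerSeries.X ^ 3
      = 1 := by
    rw [← hG]
    linear_combination (-G : PowerSeries Rcy) * hE_no6
  set e1 : Rcy := -2 * X 0 + 7 * X 1 with he1
  set e2 : Rcy := -8 * (X 0 * X 1) + 16 * X 1 ^ 2 with he2
  set e3 : Rcy := -8 * (X 0 * X 1 ^ 2) + 12 * X 1 ^ 3 with he3
  have q0 := congrArg (PowerSeries.coeff (R := Rcy) 0) hG2
  have q1 := congrArg (PowerSeries.coeff (R := Rcy) 1) hG2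
  have q2 := congrArg (PowerSeries.coeff (R := Rcy) 2) hG2
  have q3 := congrArg (PowerSeries.coeff (R := Rcy) 3) hG2
  simp only [map_add, PowerSeries.coeff_mul_X_pow', PowerSeries.coeff_mul_C,
    PowerSeries.coeff_one, Nat.reduceLeDiff, Nat.reduceSub, Nat.reduceEqDiff,
    reduceIte, add_zero, zero_add] at q0 q1 q2 q3
  -- rewrite hc₃ using the expansion of the numerator
  have hbig : (1 + PowerSeries.C (R := Rcy) (X 0) * PowerSeries.X) ^ 2 *
       (1 + PowerSeries.C (R := Rcy) (X 1) * PowerSeries.X) ^ 2 *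
       (1 + PowerSeries.C (R := Rcy) (-X 0 + X 1) * PowerSeries.X) ^ 3 *
       (1 + PowerSeries.C (R := Rcy) (-X 0 + 2 * X 1) * PowerSeries.X) * G
      = G + G * PowerSeries.C (R := Rcy) e1 * PowerSeries.X ^ 1
        + G * PowerSeries.C (R := Rcy) (-X 0 ^ 2 - 9 * (X 0 * X 1) + 20 * X 1 ^ 2) * PowerSeries.X ^ 2
        + G * PowerSeries.C (R := Rcy) (4 * X 0 ^ 3 - 12 * (X 0 ^ 2 * X 1) - 12 * (X 0 * X 1 ^ 2)
            + 30 * X 1 ^ 3) * PowerSeries.X ^ 3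
        + G * PowerSeries.C (R := Rcy) (-X 0 ^ 4 + 18 * (X 0 ^ 3 * X 1) - 39 * (X 0 ^ 2 * X 1 ^ 2)
            + 2 * (X 0 * X 1 ^ 3) + 25 * X 1 ^ 4) * PowerSeries.X ^ 4
        + G * PowerSeries.C (R := Rcy) (-2 * X 0 ^ 5 + 3 * (X 0 ^ 4 * X 1) + 24 * (X 0 ^ 3 * X 1 ^ 2)
            - 53 * (X 0 ^ 2 * X 1 ^ 3) + 18 * (X 0 * X 1 ^ 4) + 11 * X 1 ^ 5) * PowerSeries.X ^ 5
        + G * PowerSeries.C (R := Rcy) (X 0 ^ 6 - 9 * (X 0 ^ 5 * X 1) + 18 * (X 0 ^ 4 * X 1 ^ 2)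
            + 3 * (X 0 ^ 3 * X 1 ^ 3) - 30 * (X 0 ^ 2 * X 1 ^ 4) + 15 * (X 0 * X 1 ^ 5)
            + 2 * X 1 ^ 6) * PowerSeries.X ^ 6
        + G * PowerSeries.C (R := Rcy) (2 * (X 0 ^ 6 * X 1) - 12 * (X 0 ^ 5 * X 1 ^ 2)
            + 23 * (X 0 ^ 4 * X 1 ^ 3) - 14 * (X 0 ^ 3 * X 1 ^ 4) - 3 * (X 0 ^ 2 * X 1 ^ 5)
            + 4 * (X 0 * X 1 ^ 6)) * PowerSeries.X ^ 7
        + G * PowerSeries.C (R := Rcy) (X 0 ^ 6 * X 1 ^ 2 - 5 * (X 0 ^ 5 * X 1 ^ 3)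
            + 9 * (X 0 ^ 4 * X 1 ^ 4) - 7 * (X 0 ^ 3 * X 1 ^ 5)
            + 2 * (X 0 ^ 2 * X 1 ^ 6)) * PowerSeries.X ^ 8 := by
    rw [he1]
    linear_combination (G : PowerSeries Rcy) * hP_no6
  rw [hbig] at hc₃
  set p2 : Rcy := -X 0 ^ 2 - 9 * (X 0 * X 1) + 20 * X 1 ^ 2 with hp2
  set p3 : Rcy := 4 * X 0 ^ 3 - 12 * (X 0 ^ 2 * X 1) - 12 * (X 0 * X 1 ^ 2) + 30 * X 1 ^ 3 with hp3
  simp only [map_add, PowerSeries.coeff_mul_X_pow', PowerSeries.coeff_mul_C,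
    Nat.reduceLeDiff, Nat.reduceSub, Nat.reduceEqDiff, reduceIte, add_zero, zero_add,
    mul_one] at hc₃
  simp only [he1, he2, he3] at q1 q2 q3
  simp only [he1, hp2, hp3] at hc₃
  -- solve for c₃ explicitly
  have hc : c₃ = 2 * X 0 ^ 3 - 7 * X 0 ^ 2 * X 1 + 11 * X 0 * X 1 ^ 2 - 10 * X 1 ^ 3 := by
    linear_combination hc₃ + q3 + (-X 0 ^ 2 - X 0 * X 1 + 4 * X 1 ^ 2) * q1
      + (2 * X 0 ^ 3 - 7 * X 0 ^ 2 * X 1 + 11 * X 0 * X 1 ^ 2 - 10 * X 1 ^ 3) * q0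
  have key : c₃ * (2 * X 1) ^ 2 * (-2 * X 0 + 3 * X 1)
      = (212 : ℚ) • (X 0 * X 1 ^ 5) + (-120 : ℚ) • (X 1 ^ 6 : Rcy)
        + (-172 : ℚ) • (X 0 ^ 2 * X 1 ^ 4) + (80 : ℚ) • (X 0 ^ 3 * X 1 ^ 3)
        + (-16 : ℚ) • (X 0 ^ 4 * X 1 ^ 2) := by
    rw [hc]
    simp only [MvPolynomial.smul_eq_C_mul, map_neg, map_ofNat]
    ring
  have h32 := h3 2 (by norm_num) (by norm_num)
  have h33 := h3 3 (by norm_num) (by norm_num)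
  have h34 := h3 4 (by norm_num) (by norm_num)
  norm_num at h32 h33 h34
  rw [key]
  simp only [map_add, map_smul, h1, h2, h32, h33, h34, smul_eq_mul]
  norm_num
end
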